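/- arXiv:1906.09185 — 3 statements merged into one kernel-verified Lean document; each statement's English description precedes it below -/
import Mathlib

section
/- For every integer i ≥ 1, every (2^i − 1)-degenerate graph G is not Ramsey for the complete 2^{i+1}-ary tree of height 2^i, T_{2^{i+1}, 2^i}; that is, the edges of G can be coloured with two colours so that there is no monochromatic copy of T_{2^{i+1}, 2^i}. -/
open SimpleGraph

/-- The maximum degree of `G` is at most `d`: every vertex has at most `d` neighbours. -/
def MaxDegLE {α : Type*} (G : SimpleGraph α) (d : ℕ) : Prop :=
  ∀ v, (G.neighborSet v).ncard ≤ d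

/-- A closed walk `c` in `G` has a chord: an edge of `G` between two vertices of `c`
that is not an edge of `c`. -/
def HasChord {α : Type*} (G : SimpleGraph α) {u : α} (c : G.Walk u u) : Prop :=
  ∃ x y, x ∈ c.support ∧ y ∈ c.support ∧ G.Adj x y ∧ s(x, y) ∉ c.edges

/-- A graph is chordal if every cycle of length at least 4 has a chord. -/
def IsChordal {α : Type*} (G : SimpleGraph α) : Prop :=
  ∀ (u : α) (c : G.Walk u u), c.IsCycle → 4 ≤ c.length → HasChord G c

/-- `G` has treewidth at most `w`: `G` is a subgraph of a chordal graph with no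
clique on `w + 2` vertices. -/
def TreewidthLE {α : Type*} (G : SimpleGraph α) (w : ℕ) : Prop :=
  ∃ G' : SimpleGraph α, G ≤ G' ∧ IsChordal G' ∧ G'.CliqueFree (w + 2)

/-- `G` contains a copy of `H` (a subgraph isomorphic to `H`). -/
def HasCopy {α β : Type*} (G : SimpleGraph α) (H : SimpleGraph β) : Prop :=
  ∃ f : β ↪ α, ∀ u v, H.Adj u v → G.Adj (f u) (f v)

/-- Under the edge-colouring `c` of `G`, there is a copy of `H` all of whose edges
get colour `col`. -/
def HasMonoCopy {α β : Type*} (G : SimpleGraph α) (c : Sym2 α → Bool)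
    (H : SimpleGraph β) (col : Bool) : Prop :=
  ∃ f : β ↪ α, ∀ u v, H.Adj u v → G.Adj (f u) (f v) ∧ c s(f u, f v) = col

/-- `G` is Ramsey for `H`: every 2-colouring of the edges of `G` contains a
monochromatic copy of `H`. -/
def IsRamsey {α β : Type*} (G : SimpleGraph α) (H : SimpleGraph β) : Prop :=
  ∀ c : Sym2 α → Bool, ∃ col : Bool, HasMonoCopy G c H col

/-- `G` is `d`-degenerate: every nonempty (induced) subgraph has a vertex of degree
at most `d`. -/
def Degenerate {α : Type*} (d : ℕ) (G : SimpleGraph α) : Prop :=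
  ∀ s : Set α, s.Nonempty → ∃ v ∈ s, (G.neighborSet v ∩ s).ncard ≤ d

/-- The strong product `G ⊠ H`. -/
def strongProd {α β : Type*} (G : SimpleGraph α) (H : SimpleGraph β) :
    SimpleGraph (α × β) where
  Adj a b := (a.1 = b.1 ∧ H.Adj a.2 b.2) ∨ (G.Adj a.1 b.1 ∧ a.2 = b.2) ∨
    (G.Adj a.1 b.1 ∧ H.Adj a.2 b.2)
  symm := by
    constructor
    rintro a b (⟨h1, h2⟩ | ⟨h1, h2⟩ | ⟨h1, h2⟩)
    · exact Or.inl ⟨h1.symm, h2.symm⟩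
    · exact Or.inr (Or.inl ⟨h1.symm, h2.symm⟩)
    · exact Or.inr (Or.inr ⟨h1.symm, h2.symm⟩)
  loopless := by
    constructor
    rintro a (⟨_, h⟩ | ⟨h, _⟩ | ⟨h, _⟩)
    · exact H.loopless.irrefl _ h
    · exact G.loopless.irrefl _ h
    · exact G.loopless.irrefl _ h

/-- The complete `d`-ary tree of height `h`: vertices are sequences over `Fin d`
of length at most `h` (the root is the empty sequence), and each vertex `l` of
length `< h` has the `d` children `a :: l`. -/
def completeAryTree (d h : ℕ) : SimpleGraph {l : List (Fin d) // l.length ≤ h} :=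
  SimpleGraph.fromRel (fun v w => ∃ a : Fin d, w.val = a :: v.val)

/-- there is always a fresh colour avoiding a set of size ≤ d -/
lemma fresh_colour {α : Type} {d : ℕ} (lam : α → Fin (d + 1)) (S : Set α) (hS : S.Finite)
    (hcard : S.ncard ≤ d) : ∃ c : Fin (d + 1), ∀ u ∈ S, lam u ≠ c := by
  by_contra h
  push_neg at h
  have hsub : (Set.univ : Set (Fin (d + 1))) ⊆ lam '' S := by
    intro c _
    obtain ⟨u, hu, he⟩ := h c
    exact ⟨u, hu, he⟩
  have h1 : (Set.univ : Set (Fin (d + 1))).ncard ≤ (lam '' S).ncard :=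
    Set.ncard_le_ncard hsub (hS.image _)
  rw [Set.ncard_univ, Nat.card_eq_fintype_card, Fintype.card_fin] at h1
  have h2 : (lam '' S).ncard ≤ S.ncard := Set.ncard_image_le hS
  omega

lemma exists_good_order {α : Type} (d : ℕ) (G : SimpleGraph α) (hG : Degenerate d G)
    (s : Finset α) :
    ∃ (ρ : α → ℕ) (lam : α → Fin (d + 1)),
      (∀ v ∈ s, ρ v < s.card) ∧
      Set.InjOn ρ ↑s ∧
      (∀ x ∈ s, (G.neighborSet x ∩ {u | u ∈ s ∧ ρ u < ρ x}).ncard ≤ d) ∧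
      (∀ u ∈ s, ∀ v ∈ s, G.Adj u v → lam u ≠ lam v) := by
  classical
  induction s using Finset.strongInduction with
  | _ s ih =>
    by_cases hs : s.Nonempty
    · obtain ⟨v, hv, hdeg⟩ := hG ↑s (Finset.coe_nonempty.2 hs)
      have hvs : v ∈ s := hv
      have hss : s.erase v ⊂ s := Finset.erase_ssubset hvs
      obtain ⟨ρ', lam', h1, h2, h3, h4⟩ := ih (s.erase v) hss
      have hcard' : (s.erase v).card = s.card - 1 := Finset.card_erase_of_mem hvs
      have hpos : 1 ≤ s.card := Finset.card_pos.mpr hs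
      have hfin : (G.neighborSet v ∩ ↑s).Finite :=
        s.finite_toSet.subset Set.inter_subset_right
      obtain ⟨cfresh, hcfresh⟩ := fresh_colour lam' _ hfin hdeg
      refine ⟨Function.update ρ' v (s.card - 1), Function.update lam' v cfresh, ?_, ?_, ?_, ?_⟩
      · intro x hx
        by_cases hxv : x = v
        · subst hxv; rw [Function.update_self]; omega
        · rw [Function.update_of_ne hxv]
          have := h1 x (Finset.mem_erase.mpr ⟨hxv, hx⟩)
          omega
      · intro x hx y hy hxy
        have hx' : x ∈ s := hx
        have hy' : y ∈ s := hy
        by_cases hxv : x = v <;> by_cases hyv : y = v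
        · rw [hxv, hyv]
        · exfalso
          rw [hxv, Function.update_self, Function.update_of_ne hyv] at hxy
          have := h1 y (Finset.mem_erase.mpr ⟨hyv, hy'⟩)
          omega
        · exfalso
          rw [hyv, Function.update_self, Function.update_of_ne hxv] at hxy
          have := h1 x (Finset.mem_erase.mpr ⟨hxv, hx'⟩)
          omega
        · rw [Function.update_of_ne hxv, Function.update_of_ne hyv] at hxy
          exact h2 (Finset.mem_coe.mpr (Finset.mem_erase.mpr ⟨hxv, hx'⟩))
            (Finset.mem_coe.mpr (Finset.mem_erase.mpr ⟨hyv, hy'⟩)) hxy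
      · intro x hx
        by_cases hxv : x = v
        · subst hxv
          refine le_trans (Set.ncard_le_ncard ?_ hfin) hdeg
          intro u hu
          exact ⟨hu.1, hu.2.1⟩
        · have hx' : x ∈ s.erase v := Finset.mem_erase.mpr ⟨hxv, hx⟩
          have hρx : Function.update ρ' v (s.card - 1) x = ρ' x := Function.update_of_ne hxv _ _
          have htfin : (G.neighborSet x ∩ {u | u ∈ s.erase v ∧ ρ' u < ρ' x}).Finite :=
            (s.erase v).finite_toSet.subset (fun u hu => hu.2.1)
          refine le_trans (Set.ncard_le_ncard ?_ htfin) (h3 x hx')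
          rintro u ⟨hadj, hus, hlt⟩
          rw [hρx] at hlt
          have huv : u ≠ v := by
            intro h
            subst h
            rw [Function.update_self] at hlt
            have := h1 x hx'
            omega
          rw [Function.update_of_ne huv] at hlt
          exact ⟨hadj, Finset.mem_erase.mpr ⟨huv, hus⟩, hlt⟩
      · intro u hu w hw hadj
        by_cases huv : u = v <;> by_cases hwv : w = v
        · exfalso; rw [huv, hwv] at hadj; exact G.loopless.irrefl v hadj
        · rw [huv, Function.update_self, Function.update_of_ne hwv]
          intro h
          rw [huv] at hadj
          exact hcfresh w ⟨hadj, hw⟩ h.symm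
        · rw [hwv, Function.update_self, Function.update_of_ne huv]
          intro h
          rw [hwv] at hadj
          exact hcfresh u ⟨hadj.symm, hu⟩ h
        · rw [Function.update_of_ne huv, Function.update_of_ne hwv]
          exact h4 u (Finset.mem_erase.mpr ⟨huv, hu⟩) w (Finset.mem_erase.mpr ⟨hwv, hw⟩) hadj
    · rw [Finset.not_nonempty_iff_eq_empty] at hs
      subst hs
      refine ⟨fun _ => 0, fun _ => 0, by simp, by simp, by simp, by simp⟩

/-- For every integer `i ≥ 1`, every `(2^i - 1)`-degenerate graph `G` is
not Ramsey for the complete `2^(i+1)`-ary tree of height `2^i`. -/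
theorem statement4 (i : ℕ) (hi : 1 ≤ i) (α : Type) [Fintype α] (G : SimpleGraph α)
    (hG : Degenerate (2 ^ i - 1) G) :
    ¬ IsRamsey G (completeAryTree (2 ^ (i + 1)) (2 ^ i)) := by
  classical
  intro hRam
  have hp1 : 1 ≤ 2 ^ i := Nat.one_le_two_pow
  have hp2 : (2 : ℕ) ^ (i + 1) = 2 ^ i * 2 := pow_succ 2 i
  obtain ⟨ρ, lam, _h1, h2, h3, h4⟩ := exists_good_order (2 ^ i - 1) G hG Finset.univ
  have hρinj : Function.Injective ρ := fun x y h =>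
    h2 (Finset.mem_coe.mpr (Finset.mem_univ x)) (Finset.mem_coe.mpr (Finset.mem_univ y)) h
  have hproper : ∀ u v, G.Adj u v → lam u ≠ lam v := fun u v h =>
    h4 u (Finset.mem_univ u) v (Finset.mem_univ v) h
  have hback : ∀ x, (G.neighborSet x ∩ {u | ρ u < ρ x}).ncard ≤ 2 ^ i - 1 := by
    intro x
    have := h3 x (Finset.mem_univ x)
    simpa using this
  -- the colouring
  let fpair : α → α → Bool :=
    fun x y => decide ((ρ x < ρ y ∧ lam x < lam y) ∨ (ρ y < ρ x ∧ lam y < lam x))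
  have hsymm : ∀ x y, fpair x y = fpair y x := by
    intro x y
    simp only [fpair, decide_eq_decide]
    tauto
  obtain ⟨col, f, hmono⟩ := hRam (Sym2.lift ⟨fpair, hsymm⟩)
  -- the potential
  set μ : α → ℕ := fun x => if col then (lam x : ℕ) else (2 ^ i - 1) - (lam x : ℕ) with hμ
  have hμle : ∀ x, μ x ≤ 2 ^ i - 1 := by
    intro x
    have := (lam x).isLt
    by_cases hcol : col <;> simp [hμ, hcol] <;> omega
  have hstep : ∀ x y, G.Adj x y → ρ x < ρ y →
      Sym2.lift ⟨fpair, hsymm⟩ s(x, y) = col → μ x < μ y := by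
    intro x y hadj hρ hc
    rw [Sym2.lift_mk] at hc
    have hlx := (lam x).isLt
    have hly := (lam y).isLt
    have hne := hproper x y hadj
    cases col with
    | true =>
      have hP : (ρ x < ρ y ∧ lam x < lam y) ∨ (ρ y < ρ x ∧ lam y < lam x) :=
        of_decide_eq_true hc
      have hlt : (lam x : ℕ) < (lam y : ℕ) := by
        rcases hP with ⟨_, h⟩ | ⟨h, _⟩
        · exact h
        · omega
      simp only [hμ, if_true]
      omega
    | false =>
      have hP : ¬ ((ρ x < ρ y ∧ lam x < lam y) ∨ (ρ y < ρ x ∧ lam y < lam x)) :=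
        of_decide_eq_false hc
      push_neg at hP
      have hxy : lam y ≤ lam x := hP.1 hρ
      have hyx : lam y < lam x := lt_of_le_of_ne hxy (Ne.symm hne)
      have hyx' : (lam y : ℕ) < (lam x : ℕ) := hyx
      simp only [hμ, Bool.false_eq_true, if_false]
      omega
  -- path construction
  have hpath : ∀ j, j ≤ 2 ^ i → ∃ t : {l : List (Fin (2 ^ (i + 1))) // l.length ≤ 2 ^ i},
      t.val.length = j ∧ j ≤ μ (f t) := by
    intro j
    induction j with
    | zero => exact fun _ => ⟨⟨[], by simp⟩, by simp, Nat.zero_le _⟩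
    | succ j ihj =>
      intro hj
      obtain ⟨t, htlen, htμ⟩ := ihj (by omega)
      let child : Fin (2 ^ (i + 1)) → {l : List (Fin (2 ^ (i + 1))) // l.length ≤ 2 ^ i} :=
        fun a => ⟨a :: t.val, by simp [htlen]; omega⟩
      have hchildval : ∀ a, (child a).val = a :: t.val := fun a => rfl
      have hchildne : ∀ a, child a ≠ t := by
        intro a h
        have := congrArg (fun z => z.val.length) h
        simp only [hchildval, List.length_cons, htlen] at this
        omega
      have hadjH : ∀ a, (completeAryTree (2 ^ (i + 1)) (2 ^ i)).Adj t (child a) := by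
        intro a
        rw [completeAryTree, SimpleGraph.fromRel_adj]
        exact ⟨fun h => hchildne a h.symm, Or.inl ⟨a, rfl⟩⟩
      have hmono' := fun a => hmono t (child a) (hadjH a)
      have hex : ∃ a, ρ (f t) < ρ (f (child a)) := by
        by_contra hno
        push_neg at hno
        have hlt : ∀ a, ρ (f (child a)) < ρ (f t) := by
          intro a
          have hne : f (child a) ≠ f t := fun h => hchildne a (f.injective h)
          have hne2 : ρ (f (child a)) ≠ ρ (f t) := fun h => hne (hρinj h)
          have := hno a
          omega
        have hinj2 : Function.Injective (fun a => f (child a)) := by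
          intro a b hab
          have h5 := f.injective hab
          have h6 : (child a).val = (child b).val := congrArg Subtype.val h5
          rw [hchildval, hchildval] at h6
          injection h6 with h7 _
        have hsub : ↑(Finset.image (fun a => f (child a)) Finset.univ) ⊆
            G.neighborSet (f t) ∩ {u | ρ u < ρ (f t)} := by
          intro u hu
          rw [Finset.mem_coe, Finset.mem_image] at hu
          obtain ⟨a, _, rfl⟩ := hu
          exact ⟨(hmono' a).1, hlt a⟩
        have hcard := Set.ncard_le_ncard hsub (Set.toFinite _)
        rw [Set.ncard_coe_finset, Finset.card_image_of_injective _ hinj2,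
          Finset.card_univ, Fintype.card_fin] at hcard
        have := hback (f t)
        omega
      obtain ⟨a, ha⟩ := hex
      have hm := hmono' a
      have hst := hstep (f t) (f (child a)) hm.1 ha hm.2
      refine ⟨child a, ?_, by omega⟩
      rw [hchildval]
      simp [htlen]
  obtain ⟨t, htlen, htμ⟩ := hpath (2 ^ i) le_rfl
  have := hμle (f t)
  omega
end

section
/- Fix an integer t ≥ 1. Let F be a graph with maximum degree Δ ≥ 1, and let F' be a spanning subgraph of the blowup F(t) such that for every edge vw ∈ E(F) there are at least (1 − 1/(8Δ))·t² edges of F' between I(v) and I(w). Then F' contains a subgraph isomorphic to F. -/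
open SimpleGraph

/-- The blowup `F(t)` of a graph `F`: each vertex `v` is replaced by the independent
set `I(v) = {v} × Fin t` and each edge by a complete bipartite graph. -/
def blowup {α : Type*} (F : SimpleGraph α) (t : ℕ) : SimpleGraph (α × Fin t) where
  Adj a b := F.Adj a.1 b.1
  symm := ⟨fun _ _ h => h.symm⟩
  loopless := ⟨fun _ h => F.loopless.irrefl _ h⟩

section Statement8Aux

open Finset Function

open scoped Classical

variable {α : Type} [Fintype α]

/-- Edge-satisfaction predicate on unordered pairs. -/
def okP (t : ℕ) (F' : SimpleGraph (α × Fin t)) (e : Sym2 α) (g : α → Fin t) : Prop :=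
  Sym2.lift ⟨fun v w => F'.Adj (v, g v) (w, g w),
    fun v w => propext ⟨fun h => h.symm, fun h => h.symm⟩⟩ e

lemma okP_mk (t : ℕ) (F' : SimpleGraph (α × Fin t)) (v w : α) (g : α → Fin t) :
    okP t F' s(v, w) g ↔ F'.Adj (v, g v) (w, g w) := Iff.rfl

lemma okP_congr (t : ℕ) (F' : SimpleGraph (α × Fin t)) (e : Sym2 α) :
    ∀ g g' : α → Fin t, (∀ a ∈ e, g a = g' a) → (okP t F' e g ↔ okP t F' e g') := by
  induction e using Sym2.ind with
  | _ v w =>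
    intro g g' h
    rw [okP_mk, okP_mk, h v (by simp), h w (by simp)]

/-- The set of assignments satisfying all edges of `S`. -/
noncomputable def Gd (t : ℕ) (F' : SimpleGraph (α × Fin t)) (S : Finset (Sym2 α)) :
    Finset (α → Fin t) :=
  univ.filter fun g => ∀ e ∈ S, okP t F' e g

lemma mem_Gd {t : ℕ} {F' : SimpleGraph (α × Fin t)} {S : Finset (Sym2 α)} {g : α → Fin t} :
    g ∈ Gd t F' S ↔ ∀ e ∈ S, okP t F' e g := by simp [Gd]

lemma Gd_empty (t : ℕ) (F' : SimpleGraph (α × Fin t)) :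
    (Gd t F' ∅).card = t ^ Fintype.card α := by
  simp [Gd, card_univ, Fintype.card_fun]

lemma Gd_insert_card (t : ℕ) (F' : SimpleGraph (α × Fin t)) (S : Finset (Sym2 α)) (e : Sym2 α) :
    (Gd t F' (insert e S)).card
      + (univ.filter fun g => (∀ e' ∈ S, okP t F' e' g) ∧ ¬ okP t F' e g).card
      = (Gd t F' S).card := by
  have h1 : Gd t F' (insert e S) = (Gd t F' S).filter (fun g => okP t F' e g) := by
    ext g
    simp only [Gd, mem_filter, mem_univ, true_and, Finset.mem_insert]
    constructor
    · intro h; exact ⟨fun e' he' => h e' (Or.inr he'), h e (Or.inl rfl)⟩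
    · rintro ⟨h1, h2⟩ e' (rfl | he') <;> [exact h2; exact h1 e' he']
  have h2 : (univ.filter fun g => (∀ e' ∈ S, okP t F' e' g) ∧ ¬ okP t F' e g)
      = (Gd t F' S).filter (fun g => ¬ okP t F' e g) := by
    ext g
    simp only [Gd, mem_filter, mem_univ, true_and, filter_filter]
  rw [h1, h2, Finset.card_filter_add_card_filter_not]

lemma key_injection (t : ℕ) (F' : SimpleGraph (α × Fin t)) (v w : α) (hne : v ≠ w)
    (S₂ : Finset (Sym2 α)) (hS₂ : ∀ e ∈ S₂, v ∉ e ∧ w ∉ e) :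
    (univ.filter fun g : α → Fin t =>
        (∀ e' ∈ S₂, okP t F' e' g) ∧ ¬ okP t F' s(v, w) g).card * (t * t)
      ≤ (univ.filter fun p : Fin t × Fin t => ¬ F'.Adj (v, p.1) (w, p.2)).card
        * (Gd t F' S₂).card := by
  have key := Finset.card_le_card_of_injOn
    (s := (univ.filter fun g : α → Fin t =>
        (∀ e' ∈ S₂, okP t F' e' g) ∧ ¬ okP t F' s(v, w) g) ×ˢ (univ : Finset (Fin t × Fin t)))
    (t := (univ.filter fun p : Fin t × Fin t => ¬ F'.Adj (v, p.1) (w, p.2)) ×ˢ Gd t F' S₂)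
    (fun q => ((q.1 v, q.1 w), Function.update (Function.update q.1 v q.2.1) w q.2.2))
    ?_ ?_
  · simpa [Finset.card_product, card_univ, mul_comm, mul_assoc, mul_left_comm] using key
  · rintro ⟨g, a, b⟩ hq
    rw [Finset.mem_coe, Finset.mem_product] at hq
    obtain ⟨hg, -⟩ := hq
    rw [mem_filter] at hg
    obtain ⟨-, hgood, hbad⟩ := hg
    rw [Finset.mem_coe, Finset.mem_product]
    constructor
    · rw [mem_filter]
      exact ⟨mem_univ _, fun h => hbad ((okP_mk t F' v w g).mpr h)⟩
    · rw [Gd, mem_filter]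
      refine ⟨mem_univ _, fun e' he' => ?_⟩
      have hvw' := hS₂ e' he'
      refine (okP_congr t F' e' g _ ?_).mp (hgood e' he')
      intro c hc
      have hcv : c ≠ v := fun h => hvw'.1 (h ▸ hc)
      have hcw : c ≠ w := fun h => hvw'.2 (h ▸ hc)
      simp [Function.update_of_ne hcw, Function.update_of_ne hcv]
  · rintro ⟨g, a, b⟩ hq ⟨g', a', b'⟩ hq' heq
    simp only [Prod.mk.injEq] at heq
    obtain ⟨⟨h1, h2⟩, h3⟩ := heq
    have hv := congrFun h3 v
    have hw := congrFun h3 w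
    simp only [Function.update_of_ne hne, Function.update_self] at hv hw
    have hg : g = g' := by
      funext x
      by_cases hxv : x = v
      · subst hxv; exact h1
      by_cases hxw : x = w
      · subst hxw; exact h2
      have := congrFun h3 x
      simpa [Function.update_of_ne hxv, Function.update_of_ne hxw] using this
    simp [hg, hv, hw, Prod.ext_iff]

lemma card_bad_le (t Δ : ℕ) (F' : SimpleGraph (α × Fin t)) (hΔ : 1 ≤ Δ) (v w : α)
    (h : (1 - 1 / (8 * (Δ : ℝ))) * (t : ℝ) ^ 2 ≤
        (({p : Fin t × Fin t | F'.Adj (v, p.1) (w, p.2)}.ncard : ℝ))) :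
    ((univ.filter fun p : Fin t × Fin t => ¬ F'.Adj (v, p.1) (w, p.2)).card : ℝ)
      ≤ (t : ℝ) ^ 2 / (8 * Δ) := by
  have hpart := Finset.card_filter_add_card_filter_not
    (s := (univ : Finset (Fin t × Fin t))) (p := fun p => F'.Adj (v, p.1) (w, p.2))
  have hcard : ((univ : Finset (Fin t × Fin t)).card) = t ^ 2 := by
    rw [card_univ, Fintype.card_prod, Fintype.card_fin]; ring
  have hn : ({p : Fin t × Fin t | F'.Adj (v, p.1) (w, p.2)}.ncard)
      = (univ.filter fun p : Fin t × Fin t => F'.Adj (v, p.1) (w, p.2)).card := by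
    rw [Set.ncard_eq_toFinset_card', Set.toFinset_setOf]
  rw [hn] at h
  rw [hcard] at hpart
  have hΔ' : (0 : ℝ) < 8 * Δ := by positivity
  have heq : (1 - 1 / (8 * (Δ : ℝ))) * (t : ℝ) ^ 2
      = (t : ℝ) ^ 2 - (t : ℝ) ^ 2 / (8 * Δ) := by field_simp
  have hcast : ((univ.filter fun p : Fin t × Fin t => F'.Adj (v, p.1) (w, p.2)).card : ℝ)
      + ((univ.filter fun p : Fin t × Fin t => ¬ F'.Adj (v, p.1) (w, p.2)).card : ℝ)
      = (t : ℝ) ^ 2 := by exact_mod_cast hpart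
  linarith

lemma quarter (Δ : ℕ) (hΔ : 1 ≤ Δ) (k : ℕ) (hk : k ≤ 2 * Δ - 2) :
    (1 : ℝ) / 4 ≤ (1 - 1 / (2 * (Δ : ℝ))) ^ k := by
  have h1 : (1 : ℝ) ≤ Δ := by exact_mod_cast hΔ
  have hd : (0 : ℝ) < 2 * (Δ : ℝ) - 1 := by linarith
  have hkr : (k : ℝ) ≤ 2 * (Δ : ℝ) - 1 := by
    have : (k : ℝ) ≤ ((2 * Δ - 2 : ℕ) : ℝ) := by exact_mod_cast hk
    have h2 : ((2 * Δ - 2 : ℕ) : ℝ) = 2 * (Δ : ℝ) - 2 := by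
      have : 2 ≤ 2 * Δ := by omega
      push_cast [Nat.cast_sub this]; ring
    linarith [h2 ▸ this]
  have hratio : (2 * (Δ : ℝ)) / (2 * Δ - 1) ≤ Real.exp (1 / (2 * Δ - 1)) := by
    have h2 : (2 * (Δ : ℝ)) / (2 * Δ - 1) = 1 / (2 * Δ - 1) + 1 := by field_simp; ring
    rw [h2]; exact Real.add_one_le_exp _
  have hratpos : (0 : ℝ) ≤ (2 * (Δ : ℝ)) / (2 * Δ - 1) := by positivity
  have key : ((2 * (Δ : ℝ)) / (2 * Δ - 1)) ^ k ≤ 4 := by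
    calc ((2 * (Δ : ℝ)) / (2 * Δ - 1)) ^ k
        ≤ (Real.exp (1 / (2 * Δ - 1))) ^ k := pow_le_pow_left₀ hratpos hratio k
      _ = Real.exp ((k : ℝ) * (1 / (2 * Δ - 1))) := (Real.exp_nat_mul _ k).symm
      _ ≤ Real.exp 1 := by
          apply Real.exp_le_exp.mpr
          rw [mul_one_div]
          exact div_le_one_of_le₀ hkr (le_of_lt hd)
      _ ≤ 4 := by linarith [Real.exp_one_lt_d9]
  have hxpos : (0 : ℝ) < 1 - 1 / (2 * (Δ : ℝ)) := by
    rw [sub_pos, div_lt_one (by linarith)]; linarith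
  have hprod : (1 - 1 / (2 * (Δ : ℝ))) ^ k * ((2 * (Δ : ℝ)) / (2 * Δ - 1)) ^ k = 1 := by
    rw [← mul_pow]
    have : (1 - 1 / (2 * (Δ : ℝ))) * ((2 * (Δ : ℝ)) / (2 * Δ - 1)) = 1 := by
      field_simp
    rw [this, one_pow]
  have hp2 : (0 : ℝ) < ((2 * (Δ : ℝ)) / (2 * Δ - 1)) ^ k := by positivity
  have hxk : (1 - 1 / (2 * (Δ : ℝ))) ^ k = 1 / ((2 * (Δ : ℝ)) / (2 * Δ - 1)) ^ k :=
    eq_one_div_of_mul_eq_one_right (by linarith [hprod, mul_comm ((1 - 1 / (2 * (Δ : ℝ))) ^ k) (((2 * (Δ : ℝ)) / (2 * Δ - 1)) ^ k)])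
  rw [hxk]
  exact div_le_div_of_nonneg_left (by norm_num) hp2 key

lemma key_step' (t Δ : ℕ) (ht : 1 ≤ t) (hΔ : 1 ≤ Δ)
    (F : SimpleGraph α) (hdeg : ∀ v, (F.neighborSet v).ncard ≤ Δ)
    (F' : SimpleGraph (α × Fin t))
    (hedges : ∀ v w, F.Adj v w →
      (1 - 1 / (8 * (Δ : ℝ))) * (t : ℝ) ^ 2 ≤
        (({p : Fin t × Fin t | F'.Adj (v, p.1) (w, p.2)}.ncard : ℝ))) :
    ∀ S : Finset (Sym2 α), (∀ e' ∈ S, e' ∈ F.edgeSet) → ∀ e, e ∈ F.edgeSet → e ∉ S →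
      (1 - 1 / (2 * (Δ : ℝ))) * ((Gd t F' S).card : ℝ) ≤ ((Gd t F' (insert e S)).card : ℝ) := by
  intro S
  induction S using Finset.strongInductionOn with
  | _ S IH =>
    intro hSE e
    induction e using Sym2.ind with
    | _ v w =>
      intro heE heS
      have hvw : F.Adj v w := heE
      have hne : v ≠ w := hvw.ne
      set S₁ := S.filter (fun e' => v ∈ e' ∨ w ∈ e') with hS₁def
      set S₂ := S.filter (fun e' => ¬(v ∈ e' ∨ w ∈ e')) with hS₂def
      -- (iii): iterated use of the induction hypothesis
      have hmono : ∀ T : Finset (Sym2 α), T ⊆ S₁ →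
          (1 - 1 / (2 * (Δ : ℝ))) ^ T.card * ((Gd t F' S₂).card : ℝ)
            ≤ ((Gd t F' (T ∪ S₂)).card : ℝ) := by
        intro T
        induction T using Finset.induction_on with
        | empty => intro _; simp
        | @insert a T haT IHT =>
          intro hsub
          have haS₁ : a ∈ S₁ := hsub (Finset.mem_insert_self a T)
          have hTsub : T ⊆ S₁ := (Finset.subset_insert a T).trans hsub
          have h1 := IHT hTsub
          have haS : a ∈ S := (Finset.filter_subset _ S) haS₁
          have hTS : T ∪ S₂ ⊆ S :=
            Finset.union_subset (hTsub.trans (Finset.filter_subset _ S))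
              (Finset.filter_subset _ S)
          have haTS : a ∉ T ∪ S₂ := by
            rw [Finset.mem_union]
            rintro (h | h)
            · exact haT h
            · have h2 := (Finset.mem_filter.mp h).2
              exact h2 (Finset.mem_filter.mp haS₁).2
          have hss : T ∪ S₂ ⊂ S := (Finset.ssubset_iff_of_subset hTS).mpr ⟨a, haS, haTS⟩
          have h2 := IH (T ∪ S₂) hss (fun e' he' => hSE _ (hTS he')) a (hSE _ haS) haTS
          have hnn : (0 : ℝ) ≤ 1 - 1 / (2 * (Δ : ℝ)) := by
            have h1' : (1 : ℝ) ≤ Δ := by exact_mod_cast hΔ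
            have : 1 / (2 * (Δ : ℝ)) ≤ 1 := by
              rw [div_le_one (by linarith)]; linarith
            linarith
          rw [Finset.card_insert_of_notMem haT, pow_succ, Finset.insert_union]
          calc (1 - 1 / (2 * (Δ : ℝ))) ^ T.card * (1 - 1 / (2 * (Δ : ℝ)))
                * ((Gd t F' S₂).card : ℝ)
              = (1 - 1 / (2 * (Δ : ℝ)))
                * ((1 - 1 / (2 * (Δ : ℝ))) ^ T.card * ((Gd t F' S₂).card : ℝ)) := by ring
            _ ≤ (1 - 1 / (2 * (Δ : ℝ))) * ((Gd t F' (T ∪ S₂)).card : ℝ) :=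
                mul_le_mul_of_nonneg_left h1 hnn
            _ ≤ ((Gd t F' (insert a (T ∪ S₂))).card : ℝ) := h2
      -- |S₁| ≤ 2Δ-2
      have hk : S₁.card ≤ 2 * Δ - 2 := by
        have hsub : S₁ ⊆ (F.incidenceFinset v).erase s(v, w)
            ∪ (F.incidenceFinset w).erase s(v, w) := by
          intro e' he'
          obtain ⟨he'S, hor⟩ := Finset.mem_filter.mp he'
          have heE' : e' ∈ F.edgeSet := hSE _ he'S
          have hne' : e' ≠ s(v, w) := fun h => heS (h ▸ he'S)
          rcases hor with h | h
          · exact Finset.mem_union_left _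
              (Finset.mem_erase.mpr ⟨hne', (F.mem_incidenceFinset _ _).mpr ⟨heE', h⟩⟩)
          · exact Finset.mem_union_right _
              (Finset.mem_erase.mpr ⟨hne', (F.mem_incidenceFinset _ _).mpr ⟨heE', h⟩⟩)
        have hdegv : ∀ u : α, (F.incidenceFinset u).card ≤ Δ := by
          intro u
          rw [F.card_incidenceFinset_eq_degree]
          have h1 := hdeg u
          rwa [Set.ncard_eq_toFinset_card'] at h1
        have hin : s(v, w) ∈ F.incidenceFinset v := by
          rw [F.mem_incidenceFinset]
          exact ⟨heE, by simp⟩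
        have hin' : s(v, w) ∈ F.incidenceFinset w := by
          rw [F.mem_incidenceFinset]
          exact ⟨heE, by simp⟩
        calc S₁.card ≤ ((F.incidenceFinset v).erase s(v, w)
              ∪ (F.incidenceFinset w).erase s(v, w)).card := Finset.card_le_card hsub
          _ ≤ ((F.incidenceFinset v).erase s(v, w)).card
              + ((F.incidenceFinset w).erase s(v, w)).card := Finset.card_union_le _ _
          _ ≤ 2 * Δ - 2 := by
              rw [Finset.card_erase_of_mem hin, Finset.card_erase_of_mem hin']
              have := hdegv v; have := hdegv w
              omega
      -- the counting
      have hpart := Gd_insert_card t F' S s(v, w)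
      have hCC₂ : (univ.filter fun g : α → Fin t =>
            (∀ e' ∈ S, okP t F' e' g) ∧ ¬ okP t F' s(v, w) g).card
          ≤ (univ.filter fun g : α → Fin t =>
            (∀ e' ∈ S₂, okP t F' e' g) ∧ ¬ okP t F' s(v, w) g).card := by
        apply Finset.card_le_card
        apply Finset.monotone_filter_right
        intro g _ hg
        exact ⟨fun e' he' => hg.1 e' (Finset.filter_subset _ S he'), hg.2⟩
      have hinj := key_injection t F' v w hne S₂ (fun e he => by
        have h2 := (Finset.mem_filter.mp he).2
        push_neg at h2
        exact h2)
      have hbad := card_bad_le t Δ F' hΔ v w (hedges v w hvw)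
      have hS₁S₂ : S₁ ∪ S₂ = S := Finset.filter_union_filter_not_eq _ S
      have h3 : (1 - 1 / (2 * (Δ : ℝ))) ^ S₁.card * ((Gd t F' S₂).card : ℝ)
          ≤ ((Gd t F' S).card : ℝ) := by
        have := hmono S₁ (Finset.Subset.refl _)
        rwa [hS₁S₂] at this
      have hq := quarter Δ hΔ S₁.card hk
      -- cast facts (before `set`)
      have hpart'0 : ((Gd t F' (insert s(v, w) S)).card : ℝ)
          + ((univ.filter fun g : α → Fin t =>
            (∀ e' ∈ S, okP t F' e' g) ∧ ¬ okP t F' s(v, w) g).card : ℝ)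
          = ((Gd t F' S).card : ℝ) := by exact_mod_cast hpart
      have hcc0 : ((univ.filter fun g : α → Fin t =>
            (∀ e' ∈ S, okP t F' e' g) ∧ ¬ okP t F' s(v, w) g).card : ℝ)
          ≤ ((univ.filter fun g : α → Fin t =>
            (∀ e' ∈ S₂, okP t F' e' g) ∧ ¬ okP t F' s(v, w) g).card : ℝ) := by
        exact_mod_cast hCC₂
      have hinj0 : ((univ.filter fun g : α → Fin t =>
            (∀ e' ∈ S₂, okP t F' e' g) ∧ ¬ okP t F' s(v, w) g).card : ℝ) * ((t : ℝ) * (t : ℝ))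
          ≤ ((univ.filter fun p : Fin t × Fin t =>
            ¬ F'.Adj (v, p.1) (w, p.2)).card : ℝ) * ((Gd t F' S₂).card : ℝ) := by
        exact_mod_cast hinj
      have ha₂nn : (0 : ℝ) ≤ ((Gd t F' S₂).card : ℝ) := Nat.cast_nonneg _
      have hann : (0 : ℝ) ≤ ((Gd t F' S).card : ℝ) := Nat.cast_nonneg _
      -- real arithmetic
      set a : ℝ := ((Gd t F' S).card : ℝ) with ha
      set a₂ : ℝ := ((Gd t F' S₂).card : ℝ) with ha₂
      set aI : ℝ := ((Gd t F' (insert s(v, w) S)).card : ℝ) with haI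
      set c : ℝ := ((univ.filter fun g : α → Fin t =>
            (∀ e' ∈ S, okP t F' e' g) ∧ ¬ okP t F' s(v, w) g).card : ℝ) with hc
      set c₂ : ℝ := ((univ.filter fun g : α → Fin t =>
            (∀ e' ∈ S₂, okP t F' e' g) ∧ ¬ okP t F' s(v, w) g).card : ℝ) with hc₂
      set b : ℝ := ((univ.filter fun p : Fin t × Fin t =>
            ¬ F'.Adj (v, p.1) (w, p.2)).card : ℝ) with hb
      have hTpos : (0 : ℝ) < (t : ℝ) * (t : ℝ) := by
        have : (1 : ℝ) ≤ t := by exact_mod_cast ht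
        nlinarith
      have h8 : (0 : ℝ) < 8 * (Δ : ℝ) := by
        have : (1 : ℝ) ≤ Δ := by exact_mod_cast hΔ
        positivity
      have hc₂' : c₂ ≤ a₂ / (8 * Δ) := by
        have h1 : b * a₂ ≤ ((t : ℝ) ^ 2 / (8 * Δ)) * a₂ :=
          mul_le_mul_of_nonneg_right hbad ha₂nn
        have h2 : c₂ * ((t : ℝ) * (t : ℝ)) ≤ (a₂ / (8 * Δ)) * ((t : ℝ) * (t : ℝ)) := by
          calc c₂ * ((t : ℝ) * (t : ℝ)) ≤ b * a₂ := hinj0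
            _ ≤ ((t : ℝ) ^ 2 / (8 * Δ)) * a₂ := h1
            _ = (a₂ / (8 * Δ)) * ((t : ℝ) * (t : ℝ)) := by ring
        exact le_of_mul_le_mul_right h2 hTpos
      have ha₂4 : a₂ ≤ 4 * a := by
        have h1 : (1 / 4 : ℝ) * a₂ ≤ (1 - 1 / (2 * (Δ : ℝ))) ^ S₁.card * a₂ :=
          mul_le_mul_of_nonneg_right hq ha₂nn
        linarith
      have hcfin : c ≤ 1 / (2 * (Δ : ℝ)) * a := by
        have h1 : a₂ / (8 * Δ) ≤ (4 * a) / (8 * Δ) := by gcongr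
        have h2 : (4 * a) / (8 * Δ) = 1 / (2 * (Δ : ℝ)) * a := by
          field_simp; ring
        linarith
      linarith

lemma exists_good (t Δ : ℕ) (ht : 1 ≤ t) (hΔ : 1 ≤ Δ)
    (F : SimpleGraph α) (hdeg : ∀ v, (F.neighborSet v).ncard ≤ Δ)
    (F' : SimpleGraph (α × Fin t))
    (hedges : ∀ v w, F.Adj v w →
      (1 - 1 / (8 * (Δ : ℝ))) * (t : ℝ) ^ 2 ≤
        (({p : Fin t × Fin t | F'.Adj (v, p.1) (w, p.2)}.ncard : ℝ))) :
    ∃ g : α → Fin t, ∀ v w, F.Adj v w → F'.Adj (v, g v) (w, g w) := by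
  have hxpos : (0 : ℝ) < 1 - 1 / (2 * (Δ : ℝ)) := by
    have h1 : (1 : ℝ) ≤ Δ := by exact_mod_cast hΔ
    have : 1 / (2 * (Δ : ℝ)) < 1 := by
      rw [div_lt_one (by linarith)]; linarith
    linarith
  have total : ∀ T : Finset (Sym2 α), (∀ e ∈ T, e ∈ F.edgeSet) →
      (1 - 1 / (2 * (Δ : ℝ))) ^ T.card * ((t : ℝ) ^ Fintype.card α)
        ≤ ((Gd t F' T).card : ℝ) := by
    intro T
    induction T using Finset.induction_on with
    | empty =>
      intro _
      rw [Finset.card_empty, pow_zero, one_mul, Gd_empty]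
      push_cast
      exact le_refl _
    | @insert a T haT IHT =>
      intro h
      have h1 := IHT (fun e he => h e (Finset.mem_insert_of_mem he))
      have h2 := key_step' t Δ ht hΔ F hdeg F' hedges T
        (fun e he => h e (Finset.mem_insert_of_mem he)) a
        (h a (Finset.mem_insert_self a T)) haT
      rw [Finset.card_insert_of_notMem haT, pow_succ]
      calc (1 - 1 / (2 * (Δ : ℝ))) ^ T.card * (1 - 1 / (2 * (Δ : ℝ)))
            * ((t : ℝ) ^ Fintype.card α)
          = (1 - 1 / (2 * (Δ : ℝ)))
            * ((1 - 1 / (2 * (Δ : ℝ))) ^ T.card * ((t : ℝ) ^ Fintype.card α)) := by ring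
        _ ≤ (1 - 1 / (2 * (Δ : ℝ))) * ((Gd t F' T).card : ℝ) :=
            mul_le_mul_of_nonneg_left h1 (le_of_lt hxpos)
        _ ≤ ((Gd t F' (insert a T)).card : ℝ) := h2
  have hEfin : ∀ e ∈ F.edgeSet.toFinset, e ∈ F.edgeSet := by
    intro e he; rwa [Set.mem_toFinset] at he
  have htot := total F.edgeSet.toFinset hEfin
  have htpos : (0 : ℝ) < (t : ℝ) ^ Fintype.card α := by
    have : (1 : ℝ) ≤ t := by exact_mod_cast ht
    positivity
  have hpos : (0 : ℝ) < ((Gd t F' F.edgeSet.toFinset).card : ℝ) :=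
    lt_of_lt_of_le (mul_pos (pow_pos hxpos _) htpos) htot
  have hcard : 0 < (Gd t F' F.edgeSet.toFinset).card := by exact_mod_cast hpos
  obtain ⟨g, hg⟩ := Finset.card_pos.mp hcard
  refine ⟨g, fun v w hvw => ?_⟩
  have hmem : s(v, w) ∈ F.edgeSet.toFinset := by
    rw [Set.mem_toFinset]; exact hvw
  exact (okP_mk t F' v w g).mp (mem_Gd.mp hg s(v, w) hmem)


end Statement8Aux

/-- Fix `t ≥ 1`. Let `F` be a graph with maximum degree at most `Δ`
(`Δ ≥ 1`) and let `F'` be a spanning subgraph of the blowup `F(t)` such that for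
every edge `vw` of `F` there are at least `(1 - 1/(8Δ)) t²` edges of `F'` between
`I(v)` and `I(w)`. Then `F'` contains a subgraph isomorphic to `F`. -/
theorem statement8 {α : Type} [Fintype α] (t Δ : ℕ) (ht : 1 ≤ t) (hΔ : 1 ≤ Δ)
    (F : SimpleGraph α) (hdeg : MaxDegLE F Δ)
    (F' : SimpleGraph (α × Fin t)) (hsub : F' ≤ blowup F t)
    (hedges : ∀ v w, F.Adj v w →
      (1 - 1 / (8 * (Δ : ℝ))) * (t : ℝ) ^ 2 ≤
        (({p : Fin t × Fin t | F'.Adj (v, p.1) (w, p.2)}.ncard : ℝ))) :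
    HasCopy F' F := by
  obtain ⟨g, hg⟩ := exists_good t Δ ht hΔ F hdeg F' hedges
  refine ⟨⟨fun v => (v, g v), fun a b h => ?_⟩, fun u v h => hg u v h⟩
  simpa using congrArg Prod.fst h
end

section
/- Let n, d ≥ 1 be integers and let H be a non-empty graph such that for every set X ⊆ V(H) with 1 ≤ |X| ≤ 2n − 2 one has |Γ_H(X)| ≥ (d+1)·|X|. Then H contains a copy of every tree in 𝒯_{n,d}. -/
open SimpleGraph

set_option linter.unusedSectionVars false
set_option maxHeartbeats 1000000

namespace FPcore

variable {α : Type} [Fintype α] [DecidableEq α] (H : SimpleGraph α)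

/-- Finset of neighbours of a finset. -/
noncomputable def NF (X : Finset α) : Finset α :=
  (Set.toFinite {v | ∃ x ∈ X, H.Adj x v}).toFinset

lemma mem_NF {X : Finset α} {v : α} : v ∈ NF H X ↔ ∃ x ∈ X, H.Adj x v :=
  Set.Finite.mem_toFinset _

lemma NF_mono {X Y : Finset α} (h : X ⊆ Y) : NF H X ⊆ NF H Y := by
  intro v hv
  rw [mem_NF] at hv ⊢
  obtain ⟨x, hx, hxv⟩ := hv
  exact ⟨x, h hx, hxv⟩

lemma NF_union (X Y : Finset α) : NF H (X ∪ Y) = NF H X ∪ NF H Y := by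
  ext v
  simp only [mem_NF, Finset.mem_union]
  constructor
  · rintro ⟨x, hx | hx, hxv⟩
    · exact Or.inl ⟨x, hx, hxv⟩
    · exact Or.inr ⟨x, hx, hxv⟩
  · rintro (⟨x, hx, hxv⟩ | ⟨x, hx, hxv⟩)
    · exact ⟨x, Or.inl hx, hxv⟩
    · exact ⟨x, Or.inr hx, hxv⟩

lemma NF_empty : NF H (∅ : Finset α) = ∅ := by
  ext v; simp [mem_NF]

/-- number of not-yet-embedded children of index `i`. -/
def cfun (p : ℕ → ℕ) (n m i : ℕ) : ℕ := ((Finset.Ico m n).filter (fun j => p j = i)).card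

/-- image of the first `m` indices. -/
def USet (g : ℕ → α) (m : ℕ) : Finset α := (Finset.range m).image g

/-- total remaining demand of the vertices of `X`. -/
def W3 (p : ℕ → ℕ) (n : ℕ) (g : ℕ → α) (m : ℕ) (X : Finset α) : ℕ :=
  ∑ i ∈ Finset.range m, (if g i ∈ X then cfun p n m i else 0)

/-- the FP invariant. -/
def Inv (p : ℕ → ℕ) (n d : ℕ) (g : ℕ → α) (m : ℕ) : Prop :=
  ∀ X : Finset α, 1 ≤ X.card → X.card ≤ 2 * n - 2 →
    d * ((X \ USet g m).card) + W3 p n g m X ≤ ((NF H X) \ USet g m).card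

lemma W3_empty (p : ℕ → ℕ) (n : ℕ) (g : ℕ → α) (m : ℕ) : W3 p n g m (∅ : Finset α) = 0 := by
  simp [W3]

lemma W3_mono (p : ℕ → ℕ) (n : ℕ) (g : ℕ → α) (m : ℕ) {X Y : Finset α} (h : X ⊆ Y) :
    W3 p n g m X ≤ W3 p n g m Y := by
  apply Finset.sum_le_sum
  intro i _
  by_cases hx : g i ∈ X
  · simp [hx, h hx]
  · simp [hx]

lemma W3_modular (p : ℕ → ℕ) (n : ℕ) (g : ℕ → α) (m : ℕ) (X Y : Finset α) :
    W3 p n g m (X ∪ Y) + W3 p n g m (X ∩ Y) = W3 p n g m X + W3 p n g m Y := by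
  unfold W3
  rw [← Finset.sum_add_distrib, ← Finset.sum_add_distrib]
  apply Finset.sum_congr rfl
  intro i _
  by_cases hx : g i ∈ X <;> by_cases hy : g i ∈ Y <;>
    simp [hx, hy, Finset.mem_union, Finset.mem_inter]

lemma card_USet {g : ℕ → α} {m : ℕ} (hinj : Set.InjOn g (Set.Iio m)) :
    (USet g m).card = m := by
  rw [USet, Finset.card_image_of_injOn (by rwa [Finset.coe_range]), Finset.card_range]

lemma cfun_le (p : ℕ → ℕ) (n : ℕ) {m : ℕ} (hm : 1 ≤ m) (i : ℕ) :
    cfun p n m i ≤ cfun p n 1 i := by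
  apply Finset.card_le_card
  apply Finset.filter_subset_filter
  exact Finset.Ico_subset_Ico hm le_rfl

lemma W3_le (p : ℕ → ℕ) (n d : ℕ) {g : ℕ → α} {m : ℕ} (hinj : Set.InjOn g (Set.Iio m))
    (hm : 1 ≤ m) (hc : ∀ i, cfun p n 1 i ≤ d) (X : Finset α) :
    W3 p n g m X ≤ d * ((X ∩ USet g m).card) := by
  have h1 : W3 p n g m X = ∑ i ∈ (Finset.range m).filter (fun i => g i ∈ X),
      cfun p n m i := by
    rw [W3, Finset.sum_filter]
  rw [h1]
  calc ∑ i ∈ (Finset.range m).filter (fun i => g i ∈ X), cfun p n m i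
      ≤ ∑ _i ∈ (Finset.range m).filter (fun i => g i ∈ X), d := by
        apply Finset.sum_le_sum
        intro i _
        exact le_trans (cfun_le p n hm i) (hc i)
    _ = ((Finset.range m).filter (fun i => g i ∈ X)).card * d := by
        rw [Finset.sum_const, smul_eq_mul]
    _ = d * ((X ∩ USet g m).card) := by
        rw [mul_comm]
        congr 1
        have himg : ((Finset.range m).filter (fun i => g i ∈ X)).image g = X ∩ USet g m := by
          ext x
          simp only [Finset.mem_image, Finset.mem_filter, Finset.mem_range, Finset.mem_inter,
            USet]
          constructor
          · rintro ⟨i, ⟨hi, hgi⟩, rfl⟩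
            exact ⟨hgi, ⟨i, hi, rfl⟩⟩
          · rintro ⟨hx, i, hi, rfl⟩
            exact ⟨i, ⟨hi, hx⟩, rfl⟩
        rw [← himg]
        rw [Finset.card_image_of_injOn]
        intro i hi j hj hij
        simp only [Finset.coe_filter, Set.mem_setOf_eq, Finset.mem_range] at hi hj
        exact hinj (by exact hi.1 : i ∈ Set.Iio m) (by exact hj.1 : j ∈ Set.Iio m) hij

/-- critical-set size bound -/
lemma size_bound {p : ℕ → ℕ} {n d : ℕ} {g : ℕ → α} {m : ℕ}
    (hexp : ∀ X : Finset α, 1 ≤ X.card → X.card ≤ 2 * n - 2 →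
      (d + 1) * X.card ≤ (NF H X).card)
    (hinj : Set.InjOn g (Set.Iio m)) (hm : 1 ≤ m)
    (hc : ∀ i, cfun p n 1 i ≤ d)
    {X : Finset α} (hX1 : 1 ≤ X.card) (hX2 : X.card ≤ 2 * n - 2)
    (hcrit : ((NF H X) \ USet g m).card ≤ d * ((X \ USet g m).card) + W3 p n g m X) :
    X.card ≤ m := by
  have h1 := hexp X hX1 hX2
  have h2 : (NF H X).card ≤ ((NF H X) \ USet g m).card + (USet g m).card :=
    Finset.card_le_card_sdiff_add_card
  have h3 := W3_le p n d hinj hm hc X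
  have h4 : (X ∩ USet g m).card + (X \ USet g m).card = X.card :=
    Finset.card_inter_add_card_sdiff X (USet g m)
  have h5 : (USet g m).card = m := card_USet hinj
  have h6 : (d + 1) * X.card = d * X.card + X.card := by ring
  have h7 : d * X.card = d * ((X ∩ USet g m).card) + d * ((X \ USet g m).card) := by
    rw [← Nat.mul_add, h4]
  omega

end FPcore

namespace FPcore2
open FPcore

variable {α : Type} [Fintype α] [DecidableEq α] (H : SimpleGraph α)

lemma NF_submodular (X Y U : Finset α) :
    (NF H (X ∪ Y) \ U).card + (NF H (X ∩ Y) \ U).card ≤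
      (NF H X \ U).card + (NF H Y \ U).card := by
  have h1 : NF H (X ∪ Y) \ U = (NF H X \ U) ∪ (NF H Y \ U) := by
    rw [NF_union, Finset.union_sdiff_distrib]
  have h2 : NF H (X ∩ Y) \ U ⊆ (NF H X \ U) ∩ (NF H Y \ U) := by
    intro v hv
    rw [Finset.mem_sdiff] at hv
    rw [Finset.mem_inter, Finset.mem_sdiff, Finset.mem_sdiff]
    exact ⟨⟨NF_mono H Finset.inter_subset_left hv.1, hv.2⟩,
      ⟨NF_mono H Finset.inter_subset_right hv.1, hv.2⟩⟩
  calc (NF H (X ∪ Y) \ U).card + (NF H (X ∩ Y) \ U).card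
      ≤ ((NF H X \ U) ∪ (NF H Y \ U)).card + ((NF H X \ U) ∩ (NF H Y \ U)).card := by
        rw [h1]; exact Nat.add_le_add le_rfl (Finset.card_le_card h2)
    _ = (NF H X \ U).card + (NF H Y \ U).card := Finset.card_union_add_card_inter _ _

lemma sdiff_card_modular (X Y U : Finset α) :
    ((X ∪ Y) \ U).card + ((X ∩ Y) \ U).card = (X \ U).card + (Y \ U).card := by
  have h1 : (X ∪ Y) \ U = (X \ U) ∪ (Y \ U) := Finset.union_sdiff_distrib X Y U
  have h2 : (X ∩ Y) \ U = (X \ U) ∩ (Y \ U) := by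
    ext x; simp only [Finset.mem_sdiff, Finset.mem_inter]; tauto
  rw [h1, h2]
  exact Finset.card_union_add_card_inter _ _

lemma BleA {p : ℕ → ℕ} {n d : ℕ} {g : ℕ → α} {m : ℕ}
    (hInv : Inv H p n d g m) {Z : Finset α} (hZ : Z.card ≤ 2 * n - 2) :
    d * ((Z \ USet g m).card) + W3 p n g m Z ≤ ((NF H Z) \ USet g m).card := by
  rcases Nat.eq_zero_or_pos Z.card with h | h
  · have : Z = ∅ := Finset.card_eq_zero.1 h
    subst this
    simp [NF_empty, W3_empty]
  · exact hInv Z h hZ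

lemma crit_union {p : ℕ → ℕ} {n d : ℕ} {g : ℕ → α} {m : ℕ}
    (hexp : ∀ X : Finset α, 1 ≤ X.card → X.card ≤ 2 * n - 2 →
      (d + 1) * X.card ≤ (NF H X).card)
    (hinj : Set.InjOn g (Set.Iio m)) (hm : 1 ≤ m) (hmn : m < n)
    (hc : ∀ i, cfun p n 1 i ≤ d)
    (hInv : Inv H p n d g m)
    {X Y : Finset α}
    (hXne : X.Nonempty) (hXm : X.card ≤ m) (hYm : Y.card ≤ m)
    (hX : d * ((X \ USet g m).card) + W3 p n g m X = ((NF H X) \ USet g m).card)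
    (hY : d * ((Y \ USet g m).card) + W3 p n g m Y = ((NF H Y) \ USet g m).card) :
    d * (((X ∪ Y) \ USet g m).card) + W3 p n g m (X ∪ Y) = ((NF H (X ∪ Y)) \ USet g m).card
      ∧ (X ∪ Y).card ≤ m := by
  have hcup : (X ∪ Y).card ≤ 2 * n - 2 := by
    have := Finset.card_union_le X Y
    omega
  have hccap : (X ∩ Y).card ≤ 2 * n - 2 := by
    have : (X ∩ Y).card ≤ X.card := Finset.card_le_card Finset.inter_subset_left
    omega
  have h1 := NF_submodular H X Y (USet g m)
  have h2 := sdiff_card_modular X Y (USet g m)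
  have h3 := W3_modular p n g m X Y
  have h4 := BleA H hInv hcup
  have h5 := BleA H hInv hccap
  have h6 : d * (((X ∪ Y) \ USet g m).card) + d * (((X ∩ Y) \ USet g m).card) =
      d * ((X \ USet g m).card) + d * ((Y \ USet g m).card) := by
    rw [← Nat.mul_add, ← Nat.mul_add, h2]
  have heq : d * (((X ∪ Y) \ USet g m).card) + W3 p n g m (X ∪ Y) =
      ((NF H (X ∪ Y)) \ USet g m).card := by omega
  refine ⟨heq, ?_⟩
  have hc1 : 1 ≤ (X ∪ Y).card :=
    Finset.card_pos.2 (hXne.mono Finset.subset_union_left)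
  exact size_bound H hexp hinj hm hc hc1 hcup heq.ge

end FPcore2

namespace FPcore3
open FPcore FPcore2

variable {α : Type} [Fintype α] [DecidableEq α] (H : SimpleGraph α)

lemma USet_update (g : ℕ → α) (m : ℕ) (w : α) :
    USet (Function.update g m w) (m + 1) = insert w (USet g m) := by
  unfold USet
  rw [Finset.range_add_one, Finset.image_insert, Function.update_self]
  congr 1
  apply Finset.image_congr
  intro i hi
  simp only [Finset.coe_range, Set.mem_Iio] at hi
  exact Function.update_of_ne (Nat.ne_of_lt hi) _ _

lemma cfun_split (p : ℕ → ℕ) {n m : ℕ} (hmn : m < n) (i : ℕ) :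
    cfun p n m i = cfun p n (m + 1) i + (if p m = i then 1 else 0) := by
  unfold cfun
  have h1 : Finset.Ico m n = {m} ∪ Finset.Ico (m + 1) n := by
    rw [← Nat.Ico_succ_singleton, Finset.Ico_union_Ico_eq_Ico (by omega) (by omega)]
  rw [h1, Finset.filter_union, Finset.card_union_of_disjoint, Finset.filter_singleton]
  · by_cases h : p m = i <;> simp [h] <;> omega
  · apply Finset.disjoint_filter_filter
    simp only [Finset.disjoint_singleton_left, Finset.mem_Ico]
    omega

lemma W3_old_split (p : ℕ → ℕ) {n m : ℕ} (hmn : m < n) (hv : p m < m)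
    (g : ℕ → α) (X : Finset α) :
    W3 p n g m X =
      (∑ i ∈ Finset.range m, (if g i ∈ X then cfun p n (m + 1) i else 0)) +
        (if g (p m) ∈ X then 1 else 0) := by
  unfold W3
  have h1 : ∀ i ∈ Finset.range m,
      (if g i ∈ X then cfun p n m i else 0) =
        (if g i ∈ X then cfun p n (m + 1) i else 0) +
          (if p m = i then (if g i ∈ X then 1 else 0) else 0) := by
    intro i _
    by_cases h : g i ∈ X <;> by_cases h2 : p m = i <;> simp [h, h2, cfun_split p hmn]
  rw [Finset.sum_congr rfl h1, Finset.sum_add_distrib]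
  congr 1
  rw [Finset.sum_ite_eq]
  simp [Finset.mem_range.2 hv]

lemma W3_new_split (p : ℕ → ℕ) {n m : ℕ} (g : ℕ → α) (w : α) (X : Finset α) :
    W3 p n (Function.update g m w) (m + 1) X =
      (∑ i ∈ Finset.range m, (if g i ∈ X then cfun p n (m + 1) i else 0)) +
        (if w ∈ X then cfun p n (m + 1) m else 0) := by
  unfold W3
  rw [Finset.range_add_one, Finset.sum_insert Finset.notMem_range_self, Function.update_self,
    add_comm]
  congr 1
  apply Finset.sum_congr rfl
  intro i hi
  rw [Function.update_of_ne (Nat.ne_of_lt (Finset.mem_range.1 hi))]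

lemma sdiff_insert_card {A U : Finset α} {w : α} (hw : w ∉ U) :
    (A \ insert w U).card + (if w ∈ A then 1 else 0) = (A \ U).card := by
  have h : A \ insert w U = (A \ U).erase w := by
    ext x
    simp only [Finset.mem_sdiff, Finset.mem_insert, Finset.mem_erase]
    tauto
  by_cases hwA : w ∈ A
  · have hmem : w ∈ A \ U := Finset.mem_sdiff.2 ⟨hwA, hw⟩
    have hpos : 1 ≤ (A \ U).card := Finset.card_pos.2 ⟨w, hmem⟩
    rw [h, Finset.card_erase_of_mem hmem]
    simp only [hwA, if_true]
    omega
  · have : w ∉ A \ U := fun hc => hwA (Finset.mem_sdiff.1 hc).1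
    rw [h, Finset.erase_eq_of_notMem this]
    simp [hwA]

end FPcore3

namespace FPcore4
open FPcore FPcore2 FPcore3

variable {α : Type} [Fintype α] [DecidableEq α] (H : SimpleGraph α)

lemma step {p : ℕ → ℕ} {n d : ℕ}
    (hexp : ∀ X : Finset α, 1 ≤ X.card → X.card ≤ 2 * n - 2 →
      (d + 1) * X.card ≤ (NF H X).card)
    (hp : ∀ i, 1 ≤ i → i < n → p i < i)
    (hc1 : ∀ i, cfun p n 1 i ≤ d)
    (hcm : ∀ i, 1 ≤ i → i < n → cfun p n 1 i + 1 ≤ d)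
    {g : ℕ → α} {m : ℕ} (hm : 1 ≤ m) (hmn : m < n)
    (hinj : Set.InjOn g (Set.Iio m)) (hInv : Inv H p n d g m) :
    ∃ w, w ∉ USet g m ∧ w ∈ NF H {g (p m)} ∧
      Inv H p n d (Function.update g m w) (m + 1) := by
  have hv : p m < m := hp m hm hmn
  have hn2 : 2 ≤ n := by omega
  have ha : g (p m) ∈ USet g m := Finset.mem_image.2 ⟨p m, Finset.mem_range.2 hv, rfl⟩
  have hcv : 1 ≤ cfun p n m (p m) := by
    apply Finset.card_pos.2
    exact ⟨m, Finset.mem_filter.2 ⟨Finset.mem_Ico.2 ⟨le_rfl, hmn⟩, rfl⟩⟩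
  have hcmd : cfun p n (m + 1) m + 1 ≤ d :=
    le_trans (by have := cfun_le p n (m := m + 1) (by omega) m; omega) (hcm m hm hmn)
  have hWne : (NF H {g (p m)} \ USet g m).Nonempty := by
    have hI := hInv {g (p m)} (by simp) (by rw [Finset.card_singleton]; omega)
    have h0 : ({g (p m)} : Finset α) \ USet g m = ∅ :=
      Finset.sdiff_eq_empty_iff_subset.2 (Finset.singleton_subset_iff.2 ha)
    have hW3 : cfun p n m (p m) ≤ W3 p n g m {g (p m)} := by
      calc cfun p n m (p m)
          = (if g (p m) ∈ ({g (p m)} : Finset α) then cfun p n m (p m) else 0) := by simp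
        _ ≤ W3 p n g m {g (p m)} :=
          Finset.single_le_sum
            (f := fun i => if g i ∈ ({g (p m)} : Finset α) then cfun p n m i else 0)
            (fun i _ => Nat.zero_le _) (Finset.mem_range.2 hv)
    rw [h0] at hI
    simp only [Finset.card_empty, Nat.mul_zero, Nat.zero_add] at hI
    have hpos : 0 < (NF H {g (p m)} \ USet g m).card := by omega
    exact Finset.card_pos.1 hpos
  by_contra hcon
  push_neg at hcon
  -- each candidate has a critical set
  have hbad : ∀ w : α, ∃ X : Finset α, w ∈ NF H {g (p m)} \ USet g m →
      (1 ≤ X.card ∧ X.card ≤ m ∧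
        (d * ((X \ USet g m).card) + W3 p n g m X = ((NF H X) \ USet g m).card) ∧
        w ∈ NF H X ∧ g (p m) ∉ X) := by
    intro w
    by_cases hw : w ∈ NF H {g (p m)} \ USet g m
    swap
    · exact ⟨∅, fun h => absurd h hw⟩
    obtain ⟨hwNF, hwU⟩ := Finset.mem_sdiff.1 hw
    have hni : ¬ Inv H p n d (Function.update g m w) (m + 1) := hcon w hwU hwNF
    unfold FPcore.Inv at hni
    push_neg at hni
    obtain ⟨X, hX1, hX2, hlt⟩ := hni
    refine ⟨X, fun _ => ?_⟩
    have hU' : USet (Function.update g m w) (m + 1) = insert w (USet g m) := USet_update g m w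
    rw [hU'] at hlt
    have e1 : (X \ insert w (USet g m)).card + (if w ∈ X then 1 else 0)
        = (X \ USet g m).card := sdiff_insert_card hwU
    have e2 : (NF H X \ insert w (USet g m)).card + (if w ∈ NF H X then 1 else 0)
        = (NF H X \ USet g m).card := sdiff_insert_card hwU
    have e3 := W3_old_split p hmn hv g X
    have e4 := W3_new_split (n := n) (m := m) p g w X
    rw [e4] at hlt
    have hIX := hInv X hX1 hX2
    rw [e3] at hIX
    have hkey : w ∈ NF H X ∧ g (p m) ∉ X ∧
        (d * ((X \ USet g m).card) + W3 p n g m X = ((NF H X) \ USet g m).card) := by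
      rw [e3]
      by_cases h2 : w ∈ X
      · exfalso
        simp only [h2, if_true] at e1 hlt
        have e1' : (X \ USet g m).card = (X \ insert w (USet g m)).card + 1 := by omega
        have hmul : d * ((X \ insert w (USet g m)).card + 1)
            = d * (X \ insert w (USet g m)).card + d := by ring
        rw [e1', hmul] at hIX
        by_cases h3 : g (p m) ∈ X <;> by_cases h1 : w ∈ NF H X <;>
          simp only [h3, h1, if_true, if_false] at e2 hIX <;> omega
      · simp only [h2, if_false] at e1 hlt
        have e1' : (X \ USet g m).card = (X \ insert w (USet g m)).card := by omega
        rw [e1'] at hIX ⊢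
        have h1 : w ∈ NF H X := by
          by_contra h1
          simp only [h1, if_false] at e2
          by_cases h3 : g (p m) ∈ X <;> simp only [h3, if_true, if_false] at hIX <;> omega
        simp only [h1, if_true] at e2
        have h3 : g (p m) ∉ X := by
          intro h3
          simp only [h3, if_true] at hIX
          omega
        rw [if_neg h3] at hIX ⊢
        exact ⟨h1, h3, by omega⟩
    refine ⟨hX1, ?_, hkey.2.2, hkey.1, hkey.2.1⟩
    exact size_bound H hexp hinj hm hc1 hX1 hX2 hkey.2.2.ge
  choose Xf hXf using hbad
  have hind : ∀ S : Finset α, S ⊆ NF H {g (p m)} \ USet g m →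
      ((S.sup Xf).card ≤ m ∧
        (d * (((S.sup Xf) \ USet g m).card) + W3 p n g m (S.sup Xf)
          = ((NF H (S.sup Xf)) \ USet g m).card) ∧
        g (p m) ∉ S.sup Xf ∧ (∀ w ∈ S, w ∈ NF H (S.sup Xf))) := by
    intro S
    induction S using Finset.induction_on with
    | empty =>
      intro _
      simp [Finset.sup_empty, NF_empty, W3_empty]
    | @insert w S hwS ih =>
      intro hsub
      have hw : w ∈ NF H {g (p m)} \ USet g m := hsub (Finset.mem_insert_self w S)
      have hsub' : S ⊆ NF H {g (p m)} \ USet g m :=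
        fun x hx => hsub (Finset.mem_insert_of_mem hx)
      obtain ⟨ih1, ih2, ih3, ih4⟩ := ih hsub'
      obtain ⟨hb1, hb2, hb3, hb4, hb5⟩ := hXf w hw
      have hsup : (insert w S).sup Xf = Xf w ∪ S.sup Xf := by
        rw [Finset.sup_insert]; rfl
      have hXfne : (Xf w).Nonempty := Finset.card_pos.1 hb1
      obtain ⟨hcu1, hcu2⟩ := crit_union H hexp hinj hm hmn hc1 hInv hXfne hb2 ih1 hb3 ih2
      rw [hsup]
      refine ⟨hcu2, hcu1, ?_, ?_⟩
      · rw [Finset.mem_union]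
        rintro (h | h)
        · exact hb5 h
        · exact ih3 h
      · intro x hx
        rcases Finset.mem_insert.1 hx with rfl | hx
        · exact NF_mono H Finset.subset_union_left hb4
        · exact NF_mono H Finset.subset_union_right (ih4 x hx)
  obtain ⟨hD1, hD2, hD3, hD4⟩ := hind (NF H {g (p m)} \ USet g m) Finset.Subset.rfl
  have hYcard : (insert (g (p m)) ((NF H {g (p m)} \ USet g m).sup Xf)).card ≤ m + 1 :=
    le_trans (Finset.card_insert_le _ _) (by omega)
  have hIY := hInv (insert (g (p m)) ((NF H {g (p m)} \ USet g m).sup Xf))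
    (Finset.card_pos.2 ⟨g (p m), Finset.mem_insert_self _ _⟩) (by omega)
  have hYU : insert (g (p m)) ((NF H {g (p m)} \ USet g m).sup Xf) \ USet g m
      = (NF H {g (p m)} \ USet g m).sup Xf \ USet g m :=
    Finset.insert_sdiff_of_mem _ ha
  have hNFY : NF H (insert (g (p m)) ((NF H {g (p m)} \ USet g m).sup Xf)) \ USet g m
      = NF H ((NF H {g (p m)} \ USet g m).sup Xf) \ USet g m := by
    rw [Finset.insert_eq, NF_union, Finset.union_sdiff_distrib]
    rw [Finset.union_eq_right.2]
    intro x hx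
    exact Finset.mem_sdiff.2 ⟨hD4 x hx, (Finset.mem_sdiff.1 hx).2⟩
  have hW3Y : W3 p n g m ((NF H {g (p m)} \ USet g m).sup Xf) + cfun p n m (p m)
      ≤ W3 p n g m (insert (g (p m)) ((NF H {g (p m)} \ USet g m).sup Xf)) := by
    have hvr : p m ∈ Finset.range m := Finset.mem_range.2 hv
    have hsplit : ∀ (Z : Finset α), W3 p n g m Z =
        (if g (p m) ∈ Z then cfun p n m (p m) else 0) +
          ∑ i ∈ (Finset.range m).erase (p m), (if g i ∈ Z then cfun p n m i else 0) := by
      intro Z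
      exact (Finset.add_sum_erase _ _ hvr).symm
    rw [hsplit ((NF H {g (p m)} \ USet g m).sup Xf),
      hsplit (insert (g (p m)) ((NF H {g (p m)} \ USet g m).sup Xf))]
    have h1 : g (p m) ∈ insert (g (p m)) ((NF H {g (p m)} \ USet g m).sup Xf) :=
      Finset.mem_insert_self _ _
    simp only [h1, hD3, if_true, if_false]
    have h3 : ∑ i ∈ (Finset.range m).erase (p m),
          (if g i ∈ (NF H {g (p m)} \ USet g m).sup Xf then cfun p n m i else 0)
        ≤ ∑ i ∈ (Finset.range m).erase (p m),
          (if g i ∈ insert (g (p m)) ((NF H {g (p m)} \ USet g m).sup Xf)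
            then cfun p n m i else 0) := by
      apply Finset.sum_le_sum
      intro i _
      by_cases h : g i ∈ (NF H {g (p m)} \ USet g m).sup Xf
      · simp [h, Finset.mem_insert_of_mem h]
      · simp [h]
    omega
  rw [hYU, hNFY] at hIY
  omega

end FPcore4

namespace FPmain
open FPcore FPcore2 FPcore3 FPcore4

variable {α : Type} [Fintype α] [DecidableEq α] [Nonempty α] (H : SimpleGraph α)

lemma fp_main {p : ℕ → ℕ} {n d : ℕ} (hd : 1 ≤ d) (hn : 1 ≤ n)
    (hexp : ∀ X : Finset α, 1 ≤ X.card → X.card ≤ 2 * n - 2 →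
      (d + 1) * X.card ≤ (NF H X).card)
    (hp : ∀ i, 1 ≤ i → i < n → p i < i)
    (hdeg : ∀ i < n, cfun p n 1 i + (if i = 0 then 0 else 1) ≤ d) :
    ∃ g : ℕ → α, Set.InjOn g (Set.Iio n) ∧
      ∀ i, 1 ≤ i → i < n → H.Adj (g (p i)) (g i) := by
  have hc1 : ∀ i, cfun p n 1 i ≤ d := by
    intro i
    by_cases hi : i < n
    · have := hdeg i hi; omega
    · have : cfun p n 1 i = 0 := by
        apply Finset.card_eq_zero.2
        apply Finset.filter_eq_empty_iff.2
        intro j hj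
        rw [Finset.mem_Ico] at hj
        have := hp j hj.1 hj.2
        omega
      omega
  have hcm : ∀ i, 1 ≤ i → i < n → cfun p n 1 i + 1 ≤ d := by
    intro i h1 h2
    have := hdeg i h2
    rw [if_neg (by omega : ¬ i = 0)] at this
    omega
  have main : ∀ m, 1 ≤ m → m ≤ n → ∃ g : ℕ → α, Set.InjOn g (Set.Iio m) ∧
      (∀ i, 1 ≤ i → i < m → H.Adj (g (p i)) (g i)) ∧ Inv H p n d g m := by
    intro m
    induction m with
    | zero => intro h; omega
    | succ k ih =>
      intro _ hk1
      rcases Nat.eq_zero_or_pos k with rfl | hkpos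
      · -- base case m = 1
        refine ⟨fun _ => Classical.arbitrary α, ?_, ?_, ?_⟩
        · intro x hx y hy _
          simp only [Set.mem_Iio] at hx hy
          omega
        · intro i h1 h2; omega
        · show Inv H p n d (fun _ => Classical.arbitrary α) 1
          intro X hX1 hX2
          have hU : USet (fun _ => Classical.arbitrary α) 1 = {Classical.arbitrary α} := by
            unfold USet
            rw [Finset.range_one, Finset.image_singleton]
          have hW3 : W3 p n (fun _ => Classical.arbitrary α) 1 X =
              (if Classical.arbitrary α ∈ X then cfun p n 1 0 else 0) := by
            unfold W3
            rw [Finset.sum_range_one]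
          have hI := hexp X hX1 hX2
          have h2 : (NF H X).card ≤ (NF H X \ USet (fun _ => Classical.arbitrary α) 1).card
              + (USet (fun _ => Classical.arbitrary α) 1).card :=
            Finset.card_le_card_sdiff_add_card
          have hUcard : (USet (fun _ => Classical.arbitrary α) 1).card = 1 := by
            rw [hU, Finset.card_singleton]
          have hc0 : cfun p n 1 0 ≤ d := hc1 0
          have hsd := sdiff_insert_card (A := X) (U := (∅ : Finset α))
            (w := Classical.arbitrary α) (Finset.notMem_empty _)
          rw [Finset.sdiff_empty] at hsd
          have hU' : (insert (Classical.arbitrary α) (∅ : Finset α)) =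
              USet (fun _ => Classical.arbitrary α) 1 := by
            rw [hU, LawfulSingleton.insert_empty_eq]
          rw [hU'] at hsd
          have hmul1 : (d + 1) * X.card = d * X.card + X.card := by ring
          rw [hW3]
          by_cases h : Classical.arbitrary α ∈ X
          · rw [if_pos h]
            rw [if_pos h] at hsd
            have e1 : X.card = (X \ USet (fun _ => Classical.arbitrary α) 1).card + 1 := by
              omega
            have hmul3 : d * X.card
                = d * (X \ USet (fun _ => Classical.arbitrary α) 1).card + d := by
              rw [e1]; ring
            omega
          · rw [if_neg h]
            rw [if_neg h] at hsd
            have e1 : X.card = (X \ USet (fun _ => Classical.arbitrary α) 1).card := by omega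
            have hmul3 : d * X.card
                = d * (X \ USet (fun _ => Classical.arbitrary α) 1).card := by rw [e1]
            omega
      · -- inductive step
        obtain ⟨g, hinj, hadj, hInv⟩ := ih hkpos (by omega)
        obtain ⟨w, hwU, hwNF, hInv'⟩ :=
          step H hexp hp hc1 hcm hkpos (by omega) hinj hInv
        refine ⟨Function.update g k w, ?_, ?_, hInv'⟩
        · intro x hx y hy heq
          simp only [Set.mem_Iio] at hx hy
          rcases Nat.lt_succ_iff_lt_or_eq.1 hx with hx' | rfl <;>
            rcases Nat.lt_succ_iff_lt_or_eq.1 hy with hy' | rfl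
          · rw [Function.update_of_ne (by omega), Function.update_of_ne (by omega)] at heq
            exact hinj hx' hy' heq
          · rw [Function.update_of_ne (by omega), Function.update_self] at heq
            exact absurd (Finset.mem_image.2 ⟨x, Finset.mem_range.2 hx', heq⟩) hwU
          · rw [Function.update_self, Function.update_of_ne (by omega)] at heq
            exact absurd (Finset.mem_image.2 ⟨y, Finset.mem_range.2 hy', heq.symm⟩) hwU
          · rfl
        · intro i h1 h2
          rcases Nat.lt_succ_iff_lt_or_eq.1 h2 with hik | rfl
          · have hpi : p i < i := hp i h1 (by omega)
            rw [Function.update_of_ne (by omega), Function.update_of_ne (by omega)]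
            exact hadj i h1 hik
          · have hpi : p i < i := hp i h1 (by omega)
            rw [Function.update_of_ne (by omega), Function.update_self]
            rw [mem_NF] at hwNF
            obtain ⟨x, hx, hadj'⟩ := hwNF
            rw [Finset.mem_singleton] at hx
            rw [← hx]
            exact hadj'
  obtain ⟨g, hinj, hadj, _⟩ := main n hn le_rfl
  exact ⟨g, hinj, hadj⟩

end FPmain

namespace TreeOrder
open SimpleGraph

lemma tree_order {β : Type} [Fintype β] [Nonempty β] {T : SimpleGraph β}
    (hT : T.IsTree) {n d : ℕ} (hcard : Fintype.card β = n)
    (hdeg : MaxDegLE T d) :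
    ∃ (e : ℕ → β) (p : ℕ → ℕ),
      Set.InjOn e (Set.Iio n) ∧
      (∀ b : β, ∃ i, i < n ∧ e i = b) ∧
      (∀ i, 1 ≤ i → i < n → p i < i) ∧
      (∀ i, 1 ≤ i → i < n → T.Adj (e (p i)) (e i)) ∧
      (∀ u v : β, T.Adj u v →
        ∃ i, 1 ≤ i ∧ i < n ∧ ((e (p i) = u ∧ e i = v) ∨ (e (p i) = v ∧ e i = u))) ∧
      (∀ i, i < n → ((Finset.Ico 1 n).filter (fun j => p j = i)).card +
        (if i = 0 then 0 else 1) ≤ d) := by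
  classical
  set r := Classical.arbitrary β with hrdef
  have hex : ∀ v : β, ∃ q : T.Walk r v, q.IsPath :=
    fun v => ⟨((hT.isConnected.preconnected r v).some.toPath).val,
      ((hT.isConnected.preconnected r v).some.toPath).property⟩
  choose pw hpw using hex
  have huniq : ∀ (v : β) (q : T.Walk r v), q.IsPath → q = pw v := by
    intro v q hq
    exact Subtype.ext_iff.1 (hT.IsAcyclic.path_unique ⟨q, hq⟩ ⟨pw v, hpw v⟩)
  set dep : β → ℕ := fun v => (pw v).length with hdepdef
  set par : β → β := fun v => (pw v).reverse.getVert 1 with hpardef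
  have hpwr : pw r = Walk.nil := (Walk.isPath_iff_eq_nil (p := pw r)).1 (hpw r)
  have hdep_r : dep r = 0 := by
    show (pw r).length = 0
    rw [hpwr]
    rfl
  have hdep0 : ∀ v, dep v = 0 → v = r := fun v h => (Walk.eq_of_length_eq_zero h).symm
  have key1 : ∀ v, v ≠ r → T.Adj (par v) v ∧ dep (par v) + 1 = dep v := by
    intro v hv
    obtain ⟨u, h, q, hrev⟩ := Walk.exists_eq_cons_of_ne hv ((pw v).reverse)
    have hrevp : ((pw v).reverse).IsPath := (hpw v).reverse
    rw [hrev] at hrevp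
    have hqp : q.IsPath := ((Walk.cons_isPath_iff _ _).1 hrevp).1
    have hpar : par v = u := by
      show (pw v).reverse.getVert 1 = u
      rw [hrev]
      exact (Walk.getVert_cons_succ (n := 0) q h).trans (by simp)
    have hq2 : q.reverse = pw u := huniq u q.reverse hqp.reverse
    constructor
    · rw [hpar]; exact h.symm
    · rw [hpar]
      show (pw u).length + 1 = (pw v).length
      rw [← hq2, Walk.length_reverse]
      have hlen : (pw v).reverse.length = (pw v).length := Walk.length_reverse _
      rw [hrev, Walk.length_cons] at hlen
      omega
  have key2 : ∀ u v, T.Adj u v → (v ≠ r ∧ par v = u) ∨ (u ≠ r ∧ par u = v) := by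
    intro u v hA
    by_cases hvP : v ∈ (pw u).support
    · right
      have hur : u ≠ r := by
        rintro rfl
        rw [hpwr] at hvP
        simp only [Walk.support_nil, List.mem_singleton] at hvP
        subst hvP
        exact T.loopless.irrefl _ hA
      refine ⟨hur, ?_⟩
      have hdrop : (pw u).dropUntil v hvP = Walk.cons hA.symm Walk.nil := by
        have h1 : ((pw u).dropUntil v hvP).IsPath := (hpw u).dropUntil hvP
        have h2 : (Walk.cons hA.symm (Walk.nil : T.Walk u u)).IsPath := by
          rw [Walk.cons_isPath_iff]
          refine ⟨Walk.IsPath.nil, ?_⟩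
          simp only [Walk.support_nil, List.mem_singleton]
          exact hA.ne'
        exact Subtype.ext_iff.1 (hT.IsAcyclic.path_unique ⟨_, h1⟩ ⟨_, h2⟩)
      show (pw u).reverse.getVert 1 = v
      have hspec := Walk.take_spec (pw u) hvP
      rw [← hspec, hdrop, Walk.reverse_append, Walk.getVert_append]
      have hlen : (Walk.cons hA.symm (Walk.nil : T.Walk u u)).reverse.length = 1 := by
        rw [Walk.length_reverse, Walk.length_cons, Walk.length_nil]
      rw [hlen]
      simp
    · left
      have hvr : v ≠ r := fun h => hvP (h ▸ Walk.start_mem_support (pw u))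
      refine ⟨hvr, ?_⟩
      have hP' : (Walk.cons hA.symm (pw u).reverse).IsPath := by
        rw [Walk.cons_isPath_iff]
        refine ⟨(hpw u).reverse, ?_⟩
        rw [Walk.support_reverse]
        simpa using hvP
      have hP'' : ((Walk.cons hA.symm (pw u).reverse).reverse : T.Walk r v).IsPath :=
        hP'.reverse
      have heq := huniq v _ hP''
      show (pw v).reverse.getVert 1 = u
      rw [← heq, Walk.reverse_reverse]
      exact (Walk.getVert_cons_succ (n := 0) _ hA.symm).trans (by simp)
  -- enumeration sorted by depth
  have hn0 : 0 < n := by rw [← hcard]; exact Fintype.card_pos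
  set e₀ : Fin n ≃ β := (Fintype.equivFinOfCardEq hcard).symm with he₀def
  set σ : Equiv.Perm (Fin n) := Tuple.sort (fun i => dep (e₀ i)) with hσdef
  set eF : Fin n → β := fun i => e₀ (σ i) with heFdef
  have hmono : ∀ i j : Fin n, i ≤ j → dep (eF i) ≤ dep (eF j) := by
    intro i j hij
    exact Tuple.monotone_sort (fun i => dep (e₀ i)) hij
  have hEinj : Function.Injective eF := fun i j h => σ.injective (e₀.injective h)
  have hEsurj : ∀ b : β, ∃ i : Fin n, eF i = b := by
    intro b
    exact ⟨σ.symm (e₀.symm b), by simp [heFdef]⟩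
  set e : ℕ → β := fun i => if h : i < n then eF ⟨i, h⟩ else Classical.arbitrary β
    with hedef
  have heval : ∀ (i : ℕ) (h : i < n), e i = eF ⟨i, h⟩ := by
    intro i h
    simp [hedef, h]
  have he_inj : Set.InjOn e (Set.Iio n) := by
    intro x hx y hy heq
    rw [Set.mem_Iio] at hx hy
    rw [heval x hx, heval y hy] at heq
    have := hEinj heq
    exact congrArg Fin.val this
  have he0 : e 0 = r := by
    obtain ⟨j, hj⟩ := hEsurj r
    have h1 : dep (eF ⟨0, hn0⟩) ≤ dep (eF j) := by
      apply hmono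
      rw [Fin.le_def]
      exact Nat.zero_le _
    rw [hj, hdep_r] at h1
    rw [heval 0 hn0]
    exact hdep0 _ (Nat.le_zero.1 h1)
  have her : ∀ i, 1 ≤ i → i < n → e i ≠ r := by
    intro i h1 h2 heq
    have h0 : (0 : ℕ) ∈ Set.Iio n := hn0
    have : (0 : ℕ) = i := he_inj h0 h2 (by rw [he0, heq])
    omega
  set p : ℕ → ℕ := fun i =>
    if h : i < n ∧ 1 ≤ i then ((σ.symm (e₀.symm (par (e i)))) : ℕ) else 0 with hpdef
  have hpe : ∀ i, 1 ≤ i → i < n → p i < n ∧ e (p i) = par (e i) := by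
    intro i h1 h2
    have hval : p i = ((σ.symm (e₀.symm (par (e i)))) : ℕ) := by
      simp [hpdef, h1, h2]
    constructor
    · rw [hval]; exact (σ.symm (e₀.symm (par (e i)))).isLt
    · rw [hval, heval _ (σ.symm (e₀.symm (par (e i)))).isLt]
      simp [heFdef, Fin.eta]
  have hplt : ∀ i, 1 ≤ i → i < n → p i < i := by
    intro i h1 h2
    obtain ⟨hpn, hpeq⟩ := hpe i h1 h2
    have hdepi := (key1 (e i) (her i h1 h2)).2
    rw [← hpeq] at hdepi
    by_contra hcon
    push_neg at hcon
    have := hmono ⟨i, h2⟩ ⟨p i, hpn⟩ (by rw [Fin.le_def]; exact hcon)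
    rw [← heval i h2, ← heval (p i) hpn] at this
    omega
  have hadjE : ∀ i, 1 ≤ i → i < n → T.Adj (e (p i)) (e i) := by
    intro i h1 h2
    rw [(hpe i h1 h2).2]
    exact (key1 (e i) (her i h1 h2)).1
  have hidx : ∀ b : β, ∃ i : ℕ, i < n ∧ e i = b := by
    intro b
    obtain ⟨j, hj⟩ := hEsurj b
    exact ⟨j, j.isLt, by rw [heval _ j.isLt, Fin.eta]; exact hj⟩
  have hedge : ∀ u v, T.Adj u v →
      ∃ i, 1 ≤ i ∧ i < n ∧ ((e (p i) = u ∧ e i = v) ∨ (e (p i) = v ∧ e i = u)) := by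
    intro u v hA
    rcases key2 u v hA with ⟨hvr, hpar⟩ | ⟨hur, hpar⟩
    · obtain ⟨i, hi, hei⟩ := hidx v
      have h1 : 1 ≤ i := by
        rcases Nat.eq_zero_or_pos i with rfl | h
        · exact absurd (hei.symm.trans he0 ▸ rfl : v = r) hvr
        · exact h
      refine ⟨i, h1, hi, Or.inl ⟨?_, hei⟩⟩
      rw [(hpe i h1 hi).2, hei, hpar]
    · obtain ⟨i, hi, hei⟩ := hidx u
      have h1 : 1 ≤ i := by
        rcases Nat.eq_zero_or_pos i with rfl | h
        · exact absurd (hei.symm.trans he0 ▸ rfl : u = r) hur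
        · exact h
      refine ⟨i, h1, hi, Or.inr ⟨?_, hei⟩⟩
      rw [(hpe i h1 hi).2, hei, hpar]
  refine ⟨e, p, he_inj, hidx, hplt, hadjE, hedge, ?_⟩
  -- degree bound
  intro i hi
  set C := (Finset.Ico 1 n).filter (fun j => p j = i) with hCdef
  have hCmem : ∀ j ∈ C, 1 ≤ j ∧ j < n ∧ p j = i := by
    intro j hj
    rw [hCdef, Finset.mem_filter, Finset.mem_Ico] at hj
    exact ⟨hj.1.1, hj.1.2, hj.2⟩
  have hnbr : ∀ j ∈ C, e j ∈ (Set.toFinite (T.neighborSet (e i))).toFinset := by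
    intro j hj
    obtain ⟨h1, h2, h3⟩ := hCmem j hj
    rw [Set.Finite.mem_toFinset, SimpleGraph.mem_neighborSet]
    have := hadjE j h1 h2
    rw [h3] at this
    exact this
  have hcard_nbrs : (Set.toFinite (T.neighborSet (e i))).toFinset.card ≤ d := by
    rw [← Set.ncard_eq_toFinset_card (T.neighborSet (e i))]
    exact hdeg (e i)
  have hCimg : (C.image e).card = C.card := by
    apply Finset.card_image_of_injOn
    intro x hx y hy hxy
    obtain ⟨hx1, hx2, _⟩ := hCmem x hx
    obtain ⟨hy1, hy2, _⟩ := hCmem y hy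
    exact he_inj hx2 hy2 hxy
  by_cases hi0 : i = 0
  · rw [if_pos hi0, Nat.add_zero]
    calc C.card = (C.image e).card := hCimg.symm
      _ ≤ _ := Finset.card_le_card (fun x hx => by
          obtain ⟨j, hj, rfl⟩ := Finset.mem_image.1 hx
          exact hnbr j hj)
      _ ≤ d := hcard_nbrs
  · rw [if_neg hi0]
    have hi1 : 1 ≤ i := by omega
    have hpar_mem : e (p i) ∈ (Set.toFinite (T.neighborSet (e i))).toFinset := by
      rw [Set.Finite.mem_toFinset, SimpleGraph.mem_neighborSet]
      exact (hadjE i hi1 hi).symm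
    have hpar_notin : e (p i) ∉ C.image e := by
      intro hmem
      obtain ⟨j, hj, hje⟩ := Finset.mem_image.1 hmem
      obtain ⟨hj1, hj2, hj3⟩ := hCmem j hj
      have hpi : p i < i := hplt i hi1 hi
      have : j = p i := he_inj hj2 (by omega : p i < n) hje
      have hji := hplt j hj1 hj2
      omega
    have hins : insert (e (p i)) (C.image e) ⊆
        (Set.toFinite (T.neighborSet (e i))).toFinset := by
      intro x hx
      rcases Finset.mem_insert.1 hx with rfl | hx
      · exact hpar_mem
      · obtain ⟨j, hj, rfl⟩ := Finset.mem_image.1 hx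
        exact hnbr j hj
    have := Finset.card_le_card hins
    rw [Finset.card_insert_of_notMem hpar_notin, hCimg] at this
    omega

end TreeOrder

/-- Let `n, d ≥ 1` and let `H` be a non-empty graph such that
`|Γ_H(X)| ≥ (d+1)|X|` for every vertex set `X` with `1 ≤ |X| ≤ 2n - 2`. Then `H`
contains a copy of every tree with `n` vertices and maximum degree at most `d`. -/
theorem statement10 {α : Type} [Fintype α] [Nonempty α] (n d : ℕ)
    (hn : 1 ≤ n) (hd : 1 ≤ d) (H : SimpleGraph α)
    (hexp : ∀ X : Set α, 1 ≤ X.ncard → X.ncard ≤ 2 * n - 2 →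
      (d + 1) * X.ncard ≤ {v : α | ∃ x ∈ X, H.Adj x v}.ncard) :
    ∀ (β : Type) [Fintype β] (T : SimpleGraph β), T.IsTree →
      Fintype.card β = n → MaxDegLE T d → HasCopy H T := by
  intro β _ T hTree hcardβ hdegT
  classical
  have hβne : Nonempty β := Fintype.card_pos_iff.1 (by rw [hcardβ]; omega)
  obtain ⟨e, p, heinj, hsurj, hplt, hadjE, hedge, hdegE⟩ :=
    TreeOrder.tree_order hTree hcardβ hdegT
  have hexpF : ∀ X : Finset α, 1 ≤ X.card → X.card ≤ 2 * n - 2 →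
      (d + 1) * X.card ≤ (FPcore.NF H X).card := by
    intro X h1 h2
    have h3 := hexp (X : Set α) (by rwa [Set.ncard_coe_finset])
      (by rwa [Set.ncard_coe_finset])
    rw [Set.ncard_coe_finset] at h3
    have hseteq : {v : α | ∃ x ∈ (X : Set α), H.Adj x v} = {v : α | ∃ x ∈ X, H.Adj x v} := by
      ext v; simp
    rw [hseteq] at h3
    rwa [Set.ncard_eq_toFinset_card _ (Set.toFinite _)] at h3
  obtain ⟨g, hginj, hgadj⟩ := FPmain.fp_main H hd hn hexpF hplt
    (by intro i hi; exact hdegE i hi)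
  choose idx hidxlt hidxe using hsurj
  refine ⟨⟨fun b => g (idx b), ?_⟩, ?_⟩
  · intro b1 b2 hb
    have : idx b1 = idx b2 := hginj (hidxlt b1) (hidxlt b2) hb
    rw [← hidxe b1, ← hidxe b2, this]
  · intro u v hA
    obtain ⟨i, h1, h2, hcase⟩ := hedge u v hA
    have hpi : p i < n := lt_trans (hplt i h1 h2) h2
    have hadj := hgadj i h1 h2
    rcases hcase with ⟨hu, hv⟩ | ⟨hv2, hu2⟩
    · have h5 : idx u = p i := heinj (hidxlt u) hpi (by rw [hidxe, hu])
      have h6 : idx v = i := heinj (hidxlt v) h2 (by rw [hidxe, hv])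
      show H.Adj (g (idx u)) (g (idx v))
      rw [h5, h6]
      exact hadj
    · have h5 : idx v = p i := heinj (hidxlt v) hpi (by rw [hidxe, hv2])
      have h6 : idx u = i := heinj (hidxlt u) h2 (by rw [hidxe, hu2])
      show H.Adj (g (idx u)) (g (idx v))
      rw [h5, h6]
      exact hadj.symm
end
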